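/- arXiv:1707.02839 — 4 statements merged into one kernel-verified Lean document; each statement's English description precedes it below -/
import Mathlib

section
/- For any square matrix A with Λ(A) ∩ Λ(−A) = ∅ (no assumption of stability) and any 0 ≤ t_s < t_e < ∞, the matrix P_T = ∫_{t_s}^{t_e} exp(At) B Bᵀ exp(Aᵀt) dt is the unique solution of A X + X Aᵀ = −exp(A t_s) B Bᵀ exp(Aᵀ t_s) + exp(A t_e) B Bᵀ exp(Aᵀ t_e). -/
open Matrix MeasureTheory NormedSpace
open scoped Matrix

section AuxAlgebra

open Polynomial

variable {N : ℕ}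

lemma eval_charpoly' (M : Matrix (Fin N) (Fin N) ℂ) (μ : ℂ) :
    M.charpoly.eval μ = det (algebraMap ℂ (Matrix (Fin N) (Fin N) ℂ) μ - M) := by
  rw [Matrix.charpoly, eval_det, matPolyEquiv_charmatrix]
  simp [Matrix.scalar_apply, Matrix.algebraMap_eq_diagonal, Pi.algebraMap_def,
    Algebra.algebraMap_self_apply]

lemma mem_spectrum_iff_det (M : Matrix (Fin N) (Fin N) ℂ) (μ : ℂ) :
    μ ∈ spectrum ℂ M ↔ det (algebraMap ℂ (Matrix (Fin N) (Fin N) ℂ) μ - M) = 0 := by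
  rw [spectrum.mem_iff, Matrix.isUnit_iff_isUnit_det, isUnit_iff_ne_zero, not_ne_iff]

lemma sylvester_inj (A : Matrix (Fin N) (Fin N) ℝ)
    (hA : ∀ μ ∈ spectrum ℂ (A.map (algebraMap ℝ ℂ)),
            μ ∉ spectrum ℂ ((-A).map (algebraMap ℝ ℂ)))
    (X : Matrix (Fin N) (Fin N) ℝ) (hX : A * X + X * Aᵀ = 0) : X = 0 := by
  have h1 : A * X = X * (-Aᵀ) := by
    rw [mul_neg]
    exact eq_neg_of_add_eq_zero_left hX
  have h2 : ∀ k : ℕ, A ^ k * X = X * (-Aᵀ) ^ k := by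
    intro k; induction k with
    | zero => simp
    | succ k ih =>
      rw [pow_succ', pow_succ', mul_assoc, ih, ← mul_assoc, h1, mul_assoc]
  have h3 : ∀ p : ℝ[X], (aeval A p) * X = X * aeval (-Aᵀ) p := by
    intro p
    induction p using Polynomial.induction_on' with
    | add p q hp hq => simp [add_mul, mul_add, hp, hq]
    | monomial k a =>
      simp only [aeval_monomial, mul_assoc, Algebra.smul_def, map_pow]
      simp only [← mul_assoc, Algebra.commutes a X]
      simp only [mul_assoc, h2 k]
      rw [← mul_assoc X, ← Algebra.commutes a X, mul_assoc]
  set p := (-Aᵀ).charpoly with hp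
  have h4 : (aeval A p) * X = 0 := by
    rw [h3, Matrix.aeval_self_charpoly, mul_zero]
  -- show aeval A p is a unit
  let φ : Matrix (Fin N) (Fin N) ℝ →ₐ[ℝ] Matrix (Fin N) (Fin N) ℂ :=
    (Algebra.ofId ℝ ℂ).mapMatrix
  have hφ : ∀ M : Matrix (Fin N) (Fin N) ℝ, φ M = M.map (algebraMap ℝ ℂ) := fun _ => rfl
  have h5 : IsUnit (aeval A p) := by
    rw [Matrix.isUnit_iff_isUnit_det, isUnit_iff_ne_zero]
    intro hdet
    have hdetC : ((aeval A p).map (algebraMap ℝ ℂ)).det = 0 := by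
      rw [← RingHom.mapMatrix_apply, ← RingHom.map_det, hdet, map_zero]
    rw [← hφ, ← aeval_algHom_apply] at hdetC
    have hq : (aeval (φ A) p : Matrix (Fin N) (Fin N) ℂ)
        = aeval (φ A) (p.map (algebraMap ℝ ℂ)) := (aeval_map_algebraMap ℂ _ _).symm
    rw [hq] at hdetC
    set q : ℂ[X] := p.map (algebraMap ℝ ℂ) with hqdef
    have hqc : q = ((-Aᵀ).map (algebraMap ℝ ℂ)).charpoly := by
      rw [hqdef, hp, Matrix.charpoly_map]
    have hmonic : q.Monic := hqc ▸ Matrix.charpoly_monic _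
    have hsplit : q.Splits := IsAlgClosed.splits q
    have hfact : q = (q.roots.toList.map fun a => Polynomial.X - C a).prod := by
      conv_lhs => rw [hsplit.eq_prod_roots_of_monic hmonic]
      rw [← Multiset.prod_coe, ← Multiset.map_coe, Multiset.coe_toList]
    rw [hfact, map_list_prod, ← Matrix.coe_detMonoidHom, map_list_prod, List.map_map,
      List.map_map] at hdetC
    have hzmem := List.prod_eq_zero_iff.mp hdetC
    obtain ⟨a, haroot, hz⟩ := List.mem_map.mp hzmem
    have haroot' : a ∈ q.roots := by rwa [← Multiset.mem_toList]
    -- a is in the spectrum of (-A).map ℂ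
    have haspec : a ∈ spectrum ℂ ((-A).map (algebraMap ℝ ℂ)) := by
      rw [mem_spectrum_iff_det]
      have : (((-A).map (algebraMap ℝ ℂ))).charpoly.IsRoot a := by
        have hroot : q.IsRoot a := isRoot_of_mem_roots haroot'
        rw [hqc] at hroot
        rw [IsRoot, eval_charpoly'] at hroot ⊢
        have : (-Aᵀ).map (algebraMap ℝ ℂ) = (((-A).map (algebraMap ℝ ℂ)))ᵀ := by
          ext i j; simp [Matrix.map_apply]
        rw [this] at hroot
        rw [← Matrix.det_transpose, Matrix.transpose_sub, Matrix.algebraMap_eq_diagonal,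
          Matrix.diagonal_transpose, ← Matrix.algebraMap_eq_diagonal]
        exact hroot
      rw [← eval_charpoly']
      exact this
    have hna : a ∉ spectrum ℂ (A.map (algebraMap ℝ ℂ)) := fun h => hA a h haspec
    rw [spectrum.mem_iff, not_not] at hna
    -- the vanishing factor contradicts hna
    have hu : IsUnit ((φ A) - algebraMap ℂ (Matrix (Fin N) (Fin N) ℂ) a) := by
      have h := hna.neg
      rw [neg_sub] at h
      exact h
    have hz' : ((φ A) - algebraMap ℂ (Matrix (Fin N) (Fin N) ℂ) a).det = 0 := by
      simpa [Function.comp, map_sub] using hz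
    exact isUnit_iff_ne_zero.mp (Matrix.isUnit_iff_isUnit_det _ |>.mp hu) hz'
  exact (IsUnit.mul_right_eq_zero h5).mp h4

end AuxAlgebra

section AuxLinfty

attribute [local instance] Matrix.linftyOpNormedAddCommGroup Matrix.linftyOpNormedRing
  Matrix.linftyOpNormedAlgebra

lemma slope_exp_aux {N : ℕ} (A : Matrix (Fin N) (Fin N) ℝ) (t : ℝ) :
    Filter.Tendsto (slope (fun u : ℝ => NormedSpace.exp (u • A)) t) (nhdsWithin t {t}ᶜ)
      (nhds (NormedSpace.exp (t • A) * A)) := by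
  exact hasDerivAt_iff_tendsto_slope.mp (hasDerivAt_exp_smul_const A t)

lemma slope_exp_aux' {N : ℕ} (A : Matrix (Fin N) (Fin N) ℝ) (t : ℝ) :
    Filter.Tendsto (slope (fun u : ℝ => NormedSpace.exp (u • A)) t) (nhdsWithin t {t}ᶜ)
      (nhds (A * NormedSpace.exp (t • A))) := by
  exact hasDerivAt_iff_tendsto_slope.mp (hasDerivAt_exp_smul_const' A t)

end AuxLinfty

section AuxSup

attribute [local instance] Matrix.normedAddCommGroup Matrix.normedSpace

variable {N : ℕ}

noncomputable abbrev matENormAux : ENormedAddMonoid (Matrix (Fin N) (Fin N) ℝ) :=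
  NormedAddGroup.toENormedAddMonoid

noncomputable abbrev clmNormAux :
    NormedAddCommGroup (Matrix (Fin N) (Fin N) ℝ →L[ℝ] Matrix (Fin N) (Fin N) ℝ) :=
  ContinuousLinearMap.toNormedAddCommGroup

attribute [local instance] clmNormAux

noncomputable abbrev clmSpaceAux :
    NormedSpace ℝ (Matrix (Fin N) (Fin N) ℝ →L[ℝ] Matrix (Fin N) (Fin N) ℝ) :=
  ContinuousLinearMap.toNormedSpace

attribute [local instance] matENormAux clmSpaceAux

lemma hasDerivAt_exp_sup (A : Matrix (Fin N) (Fin N) ℝ) (t : ℝ) :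
    HasDerivAt (fun u : ℝ => NormedSpace.exp (u • A)) (NormedSpace.exp (t • A) * A) t := by
  exact hasDerivAt_iff_tendsto_slope.mpr (slope_exp_aux A t)

lemma hasDerivAt_exp_sup' (A : Matrix (Fin N) (Fin N) ℝ) (t : ℝ) :
    HasDerivAt (fun u : ℝ => NormedSpace.exp (u • A)) (A * NormedSpace.exp (t • A)) t := by
  exact hasDerivAt_iff_tendsto_slope.mpr (slope_exp_aux' A t)

noncomputable def mulCLM (C : Matrix (Fin N) (Fin N) ℝ) :
    Matrix (Fin N) (Fin N) ℝ →L[ℝ] Matrix (Fin N) (Fin N) ℝ →L[ℝ] Matrix (Fin N) (Fin N) ℝ :=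
  LinearMap.toContinuousLinearMap
  { toFun := fun X => LinearMap.toContinuousLinearMap (LinearMap.mulLeft ℝ (X * C))
    map_add' := fun X Y => by ext Z; simp [add_mul, mul_assoc]
    map_smul' := fun r X => by ext Z; simp [smul_mul_assoc, mul_assoc] }

lemma mulCLM_apply (C X Y : Matrix (Fin N) (Fin N) ℝ) : mulCLM C X Y = X * C * Y := rfl

lemma hasDerivAt_F (A C : Matrix (Fin N) (Fin N) ℝ) (t : ℝ) :
    HasDerivAt (fun u : ℝ => NormedSpace.exp (u • A) * C * NormedSpace.exp (u • Aᵀ))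
      (A * (NormedSpace.exp (t • A) * C * NormedSpace.exp (t • Aᵀ))
        + (NormedSpace.exp (t • A) * C * NormedSpace.exp (t • Aᵀ)) * Aᵀ) t := by
  have hg := hasDerivAt_exp_sup' A t
  have hh := hasDerivAt_exp_sup Aᵀ t
  have hc : HasDerivAt (fun u : ℝ => mulCLM C (NormedSpace.exp (u • A)))
      (mulCLM C (A * NormedSpace.exp (t • A))) t :=
    (mulCLM C).hasFDerivAt.comp_hasDerivAt t hg
  have := hc.clm_apply hh
  refine this.congr_deriv ?_
  erw [mulCLM_apply, mulCLM_apply]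
  noncomm_ring

lemma continuous_exp_smul (A : Matrix (Fin N) (Fin N) ℝ) :
    Continuous (fun u : ℝ => NormedSpace.exp (u • A)) :=
  continuous_iff_continuousAt.mpr fun t => (hasDerivAt_exp_sup A t).continuousAt

lemma continuous_F (A : Matrix (Fin N) (Fin N) ℝ) (C : Matrix (Fin N) (Fin N) ℝ) :
    Continuous (fun u : ℝ => NormedSpace.exp (u • A) * C * NormedSpace.exp (u • Aᵀ)) :=
  ((continuous_exp_smul A).mul continuous_const).mul (continuous_exp_smul Aᵀ)

noncomputable def sylvCLM (A : Matrix (Fin N) (Fin N) ℝ) :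
    Matrix (Fin N) (Fin N) ℝ →L[ℝ] Matrix (Fin N) (Fin N) ℝ :=
  LinearMap.toContinuousLinearMap
  { toFun := fun X => A * X + X * Aᵀ
    map_add' := fun X Y => by noncomm_ring
    map_smul' := fun r X => by simp [mul_smul_comm, smul_mul_assoc] }

lemma key (A C : Matrix (Fin N) (Fin N) ℝ) (ts te : ℝ) :
    A * (∫ t in ts..te, NormedSpace.exp (t • A) * C * NormedSpace.exp (t • Aᵀ))
      + (∫ t in ts..te, NormedSpace.exp (t • A) * C * NormedSpace.exp (t • Aᵀ)) * Aᵀ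
    = -(NormedSpace.exp (ts • A) * C * NormedSpace.exp (ts • Aᵀ)) + NormedSpace.exp (te • A) * C * NormedSpace.exp (te • Aᵀ) := by
  set f := fun t : ℝ => NormedSpace.exp (t • A) * C * NormedSpace.exp (t • Aᵀ) with hf
  have hfi : IntervalIntegrable f volume ts te := (continuous_F A C).intervalIntegrable ts te
  have h1 : A * (∫ t in ts..te, f t) + (∫ t in ts..te, f t) * Aᵀ
      = sylvCLM A (∫ t in ts..te, f t) := rfl
  rw [h1]
  refine ((sylvCLM A).intervalIntegral_comp_comm hfi).symm.trans ?_
  have h2 : (∫ t in ts..te, sylvCLM A (f t)) = f te - f ts := by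
    apply intervalIntegral.integral_eq_sub_of_hasDerivAt
    · intro t _
      exact hasDerivAt_F A C t
    · apply Continuous.intervalIntegrable
      exact (sylvCLM A).continuous.comp (continuous_F A C)
  refine h2.trans ?_; abel

end AuxSup

attribute [local instance] Matrix.normedAddCommGroup Matrix.normedSpace


theorem time_limited_gramian_unique_solution {n m : ℕ}
    (A : Matrix (Fin n) (Fin n) ℝ) (B : Matrix (Fin n) (Fin m) ℝ)
    (hA : ∀ μ ∈ spectrum ℂ (A.map (algebraMap ℝ ℂ)),
            μ ∉ spectrum ℂ ((-A).map (algebraMap ℝ ℂ)))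
    (ts te : ℝ) (hts : 0 ≤ ts) (hte : ts < te) :
    ∀ X : Matrix (Fin n) (Fin n) ℝ,
      A * X + X * Aᵀ =
        -(NormedSpace.exp (ts • A) * B * Bᵀ * NormedSpace.exp (ts • Aᵀ))
          + NormedSpace.exp (te • A) * B * Bᵀ * NormedSpace.exp (te • Aᵀ)
      ↔ X = ∫ t in ts..te, NormedSpace.exp (t • A) * B * Bᵀ * NormedSpace.exp (t • Aᵀ) := by
  intro X
  have hfun : (fun t : ℝ => NormedSpace.exp (t • A) * B * Bᵀ * NormedSpace.exp (t • Aᵀ))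
      = fun t : ℝ => NormedSpace.exp (t • A) * (B * Bᵀ) * NormedSpace.exp (t • Aᵀ) := by
    funext t; simp only [Matrix.mul_assoc]
  have hkey : A * (∫ t in ts..te, NormedSpace.exp (t • A) * B * Bᵀ * NormedSpace.exp (t • Aᵀ))
      + (∫ t in ts..te, NormedSpace.exp (t • A) * B * Bᵀ * NormedSpace.exp (t • Aᵀ)) * Aᵀ
      = -(NormedSpace.exp (ts • A) * B * Bᵀ * NormedSpace.exp (ts • Aᵀ))
          + NormedSpace.exp (te • A) * B * Bᵀ * NormedSpace.exp (te • Aᵀ) := by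
    rw [hfun]
    rw [key A (B * Bᵀ) ts te]
    simp only [Matrix.mul_assoc]
  set P := ∫ t in ts..te, NormedSpace.exp (t • A) * B * Bᵀ * NormedSpace.exp (t • Aᵀ) with hP
  constructor
  · intro hX
    have hdiff : A * (X - P) + (X - P) * Aᵀ = 0 := by
      have h := hX.trans hkey.symm
      have hrearr : A * (X - P) + (X - P) * Aᵀ
          = (A * X + X * Aᵀ) - (A * P + P * Aᵀ) := by noncomm_ring
      rw [hrearr, h, sub_self]
    have := sylvester_inj A hA (X - P) hdiff
    rwa [sub_eq_zero] at this
  · rintro rfl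
    exact hkey
end

section
/- Let A ∈ ℂ^{n×n} be Hurwitz and diagonalizable with A = X Λ X⁻¹, Λ = diag(λ₁,…,λ_n), and B ∈ ℂ^n. Set w = X⁻¹B and X_B = X diag(w). Then the infinite Gramian P_∞ = ∫₀^∞ exp(At) B B^H exp(A^H t) dt equals X_B 𝒞 X_B^H, where 𝒞 is the Cauchy matrix with entries 𝒞_{ij} = −1/(λ_i + conj(λ_j)). -/
open Matrix MeasureTheory NormedSpace Filter Set
open scoped Matrix ComplexConjugate

attribute [local instance] Matrix.normedAddCommGroup Matrix.normedSpace

lemma aux_integrableOn_cexp {μ : ℂ} (h : μ.re < 0) :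
    IntegrableOn (fun t : ℝ => Complex.exp (t * μ)) (Ioi 0) := by
  refine Integrable.mono' (g := fun t : ℝ => Real.exp (-(-μ.re) * t))
    (exp_neg_integrableOn_Ioi 0 (by linarith)) ?_ ?_
  · exact (Continuous.cexp (by continuity)).aestronglyMeasurable
  · refine Filter.Eventually.of_forall fun t => ?_
    rw [Complex.norm_exp]
    simp [mul_comm]

lemma aux_hasDerivAt_cexp (μ : ℂ) (hμ : μ ≠ 0) (x : ℝ) :
    HasDerivAt (fun t : ℝ => Complex.exp (t * μ) / μ) (Complex.exp (x * μ)) x := by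
  have h1 : HasDerivAt (fun t : ℝ => (t : ℂ) * μ) μ x := by
    simpa using (Complex.ofRealCLM.hasDerivAt (x := x)).mul_const μ
  simpa [mul_div_assoc, mul_div_cancel_right₀ _ hμ] using h1.cexp.div_const μ

lemma aux_integral_cexp {μ : ℂ} (h : μ.re < 0) :
    ∫ t : ℝ in Ioi 0, Complex.exp (t * μ) = -(1 / μ) := by
  have hμ : μ ≠ 0 := fun hc => by simp [hc] at h
  have htend : Tendsto (fun x : ℝ => Complex.exp (x * μ) / μ) atTop (nhds 0) := by
    rw [tendsto_zero_iff_norm_tendsto_zero]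
    have : (fun x : ℝ => ‖Complex.exp (x * μ) / μ‖) =
        fun x : ℝ => Real.exp (x * μ.re) / ‖μ‖ := by
      funext x
      rw [norm_div, Complex.norm_exp]
      simp
    rw [this]
    have h1 : Tendsto (fun x : ℝ => x * μ.re) atTop atBot :=
      tendsto_id.atTop_mul_const_of_neg h
    simpa using (Real.tendsto_exp_atBot.comp h1).div_const ‖μ‖
  have := integral_Ioi_of_hasDerivAt_of_tendsto'
    (fun x _ => aux_hasDerivAt_cexp μ hμ x) (aux_integrableOn_cexp h) htend
  simpa using this

theorem infinite_gramian_cauchy_factorization {n : ℕ}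
    (A X : Matrix (Fin n) (Fin n) ℂ) (l : Fin n → ℂ)
    (B : Matrix (Fin n) (Fin 1) ℂ)
    (hX : IsUnit X) (hdiag : A = X * Matrix.diagonal l * X⁻¹)
    (hHurwitz : ∀ i, (l i).re < 0) :
    (∫ t in Set.Ioi (0:ℝ), exp ((t:ℂ) • A) * B * Bᴴ * exp ((t:ℂ) • Aᴴ))
      = (X * Matrix.diagonal (fun i => (X⁻¹ * B) i 0)) *
          (Matrix.of fun i j => -(1 / (l i + conj (l j)))) *
          (X * Matrix.diagonal (fun i => (X⁻¹ * B) i 0))ᴴ := by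
  set w : Fin n → ℂ := fun i => (X⁻¹ * B) i 0 with hw
  set Y : Matrix (Fin n) (Fin n) ℂ := X * Matrix.diagonal w with hY
  set μ : Fin n → Fin n → ℂ := fun i j => l i + conj (l j) with hμdef
  have hμre : ∀ i j, (μ i j).re < 0 := by
    intro i j
    have := hHurwitz i; have := hHurwitz j
    simp only [hμdef, Complex.add_re, Complex.conj_re]
    linarith
  set f : ℝ → Matrix (Fin n) (Fin n) ℂ :=
    fun t => Matrix.of fun i j => Complex.exp (t * μ i j) with hf
  -- step A : integrand = Y * f t * Yᴴ
  have stepA : ∀ t : ℝ,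
      exp ((t:ℂ) • A) * B * Bᴴ * exp ((t:ℂ) • Aᴴ) = Y * f t * Yᴴ := by
    intro t
    have hsmul : (t:ℂ) • A = X * Matrix.diagonal (fun i => (t:ℂ) * l i) * X⁻¹ := by
      rw [hdiag]
      rw [show (fun i => (t:ℂ) * l i) = (t:ℂ) • l from rfl, Matrix.diagonal_smul]
      rw [Matrix.mul_smul, Matrix.smul_mul]
    have hexp : exp ((t:ℂ) • A)
        = X * Matrix.diagonal (fun i => Complex.exp (t * l i)) * X⁻¹ := by
      rw [hsmul, Matrix.exp_conj X _ hX, Matrix.exp_diagonal]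
      have hv : exp (fun i => (t:ℂ) * l i) = fun i => Complex.exp ((t:ℂ) * l i) := by
        rw [Pi.exp_def]
        funext i
        rw [← Complex.exp_eq_exp_ℂ]
      rw [hv]
    have hexpH : exp ((t:ℂ) • Aᴴ) = (exp ((t:ℂ) • A))ᴴ := by
      rw [← Matrix.exp_conjTranspose]
      congr 1
      rw [Matrix.conjTranspose_smul]
      simp [Complex.conj_ofReal]
    set ct : Matrix (Fin n) (Fin 1) ℂ :=
      Matrix.of fun i _ => Complex.exp (t * l i) with hct
    have hP : exp ((t:ℂ) • A) * B = Y * ct := by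
      rw [hexp]
      have h1 : Matrix.diagonal (fun i => Complex.exp (t * l i)) * (X⁻¹ * B)
          = Matrix.diagonal w * ct := by
        ext i j
        simp [Matrix.diagonal_mul, hct, Subsingleton.elim j 0, mul_comm, hw]
      calc X * Matrix.diagonal (fun i => Complex.exp (t * l i)) * X⁻¹ * B
          = X * (Matrix.diagonal (fun i => Complex.exp (t * l i)) * (X⁻¹ * B)) := by
            rw [Matrix.mul_assoc, Matrix.mul_assoc]
        _ = X * (Matrix.diagonal w * ct) := by rw [h1]
        _ = Y * ct := by rw [hY, Matrix.mul_assoc]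
    have hcc : ct * ctᴴ = f t := by
      ext i j
      simp only [Matrix.mul_apply, Matrix.conjTranspose_apply, hct, Matrix.of_apply,
        Fin.sum_univ_one, hf, hμdef]
      simp [Complex.star_def, ← Complex.exp_conj, ← Complex.exp_add, mul_add,
        Complex.conj_ofReal]
    calc exp ((t:ℂ) • A) * B * Bᴴ * exp ((t:ℂ) • Aᴴ)
        = (exp ((t:ℂ) • A) * B) * (exp ((t:ℂ) • A) * B)ᴴ := by
          rw [hexpH, Matrix.conjTranspose_mul, Matrix.mul_assoc]
      _ = (Y * ct) * (Y * ct)ᴴ := by rw [hP]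
      _ = Y * (ct * ctᴴ) * Yᴴ := by
          rw [Matrix.conjTranspose_mul]
          simp [Matrix.mul_assoc]
      _ = Y * f t * Yᴴ := by rw [hcc]
  -- step B : integrability and value of ∫ f
  have hfsum : ∀ t : ℝ, f t = ∑ i : Fin n, ∑ j : Fin n,
      Complex.exp (t * μ i j) • Matrix.single i j (1 : ℂ) := by
    intro t
    simp_rw [Matrix.smul_single, smul_eq_mul, mul_one]
    exact Matrix.matrix_eq_sum_single (f t)
  letI : @ESeminormedAddCommMonoid (Matrix (Fin n) (Fin n) ℂ) instTopologicalSpaceMatrix :=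
    NormedAddCommGroup.toENormedAddCommMonoid.toESeminormedAddCommMonoid
  have hInt : IntegrableOn f (Ioi 0) := by
    have : IntegrableOn (fun t : ℝ => ∑ i : Fin n, ∑ j : Fin n,
        Complex.exp (t * μ i j) • Matrix.single i j (1 : ℂ)) (Ioi 0) := by
      apply integrable_finset_sum
      intro i _
      apply integrable_finset_sum
      intro j _
      exact (aux_integrableOn_cexp (hμre i j)).smul_const _
    exact this.congr_fun (fun t _ => (hfsum t).symm) measurableSet_Ioi
  have hIval : ∫ t in Ioi (0:ℝ), f t
      = Matrix.of fun i j => -(1 / (l i + conj (l j))) := by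
    rw [setIntegral_congr_fun measurableSet_Ioi (fun t _ => hfsum t)]
    rw [integral_finset_sum _ (fun i _ => integrable_finset_sum _
      (fun j _ => (aux_integrableOn_cexp (hμre i j)).smul_const _))]
    have : ∀ i : Fin n, (∫ t in Ioi (0:ℝ), ∑ j : Fin n,
        Complex.exp (t * μ i j) • Matrix.single i j (1 : ℂ))
        = ∑ j : Fin n, (∫ t in Ioi (0:ℝ), Complex.exp (t * μ i j)) •
            Matrix.single i j (1 : ℂ) := by
      intro i
      rw [integral_finset_sum _ (fun j _ => (aux_integrableOn_cexp (hμre i j)).smul_const _)]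
      exact Finset.sum_congr rfl fun j _ => integral_smul_const _ _
    simp_rw [this, aux_integral_cexp (hμre _ _)]
    rw [Matrix.matrix_eq_sum_single (Matrix.of fun i j => -(1 / (l i + conj (l j))))]
    simp_rw [Matrix.smul_single, smul_eq_mul, mul_one]
    rfl
  -- step C : pull the constant matrices out
  let L : Matrix (Fin n) (Fin n) ℂ →ₗ[ℂ] Matrix (Fin n) (Fin n) ℂ :=
    { toFun := fun G => Y * G * Yᴴ
      map_add' := fun G H => by simp [Matrix.mul_add, Matrix.add_mul]
      map_smul' := fun c G => by simp [Matrix.mul_smul, Matrix.smul_mul] }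
  let L' := LinearMap.toContinuousLinearMap L
  have hcomm := L'.integral_comp_comm hInt
  calc (∫ t in Set.Ioi (0:ℝ), exp ((t:ℂ) • A) * B * Bᴴ * exp ((t:ℂ) • Aᴴ))
      = ∫ t in Set.Ioi (0:ℝ), L' (f t) := by
        refine setIntegral_congr_fun measurableSet_Ioi fun t _ => ?_
        rw [stepA t]; rfl
    _ = L' (∫ t in Set.Ioi (0:ℝ), f t) := hcomm
    _ = Y * (Matrix.of fun i j => -(1 / (l i + conj (l j)))) * Yᴴ := by
        rw [hIval]; rfl
end

section
/- Under the assumptions of the preceding eigendecomposition setting, the time-limited Gramian over [0, t_e] admits the factored form P_T = X_B (𝒞 − exp(Λ t_e) 𝒞 exp(Λ^H t_e)) X_B^H. -/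
open Matrix MeasureTheory NormedSpace
open scoped Matrix ComplexConjugate

attribute [local instance] Matrix.normedAddCommGroup Matrix.normedSpace

theorem time_limited_gramian_cauchy_factorization {n : ℕ}
    (A X : Matrix (Fin n) (Fin n) ℂ) (l : Fin n → ℂ)
    (B : Matrix (Fin n) (Fin 1) ℂ) (te : ℝ) (hte : 0 < te)
    (hX : IsUnit X) (hdiag : A = X * Matrix.diagonal l * X⁻¹)
    (hHurwitz : ∀ i, (l i).re < 0) :
    (∫ t in (0:ℝ)..te, exp ((t:ℂ) • A) * B * Bᴴ * exp ((t:ℂ) • Aᴴ))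
      = (X * Matrix.diagonal (fun i => (X⁻¹ * B) i 0)) *
          ((Matrix.of fun i j => -(1 / (l i + conj (l j))))
            - exp ((te:ℂ) • Matrix.diagonal l) *
                (Matrix.of fun i j => -(1 / (l i + conj (l j)))) *
                exp ((te:ℂ) • (Matrix.diagonal l)ᴴ)) *
          (X * Matrix.diagonal (fun i => (X⁻¹ * B) i 0))ᴴ := by
  -- abbreviations
  set XB : Matrix (Fin n) (Fin n) ℂ := X * Matrix.diagonal (fun i => (X⁻¹ * B) i 0) with hXB
  set μ : Fin n → Fin n → ℂ := fun i j => l i + conj (l j) with hμ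
  have hμ0 : ∀ i j, μ i j ≠ 0 := by
    intro i j h
    have : (μ i j).re < 0 := by
      simp only [hμ, Complex.add_re, Complex.conj_re]
      linarith [hHurwitz i, hHurwitz j]
    rw [h] at this; simp at this
  -- exp of scaled diagonal
  have hexpdiag : ∀ (t : ℝ) (v : Fin n → ℂ),
      exp ((t:ℂ) • Matrix.diagonal v)
        = Matrix.diagonal (fun i => Complex.exp ((t:ℂ) * v i)) := by
    intro t v
    rw [← Matrix.diagonal_smul, Matrix.exp_diagonal, Pi.exp_def]
    refine congrArg Matrix.diagonal (funext fun i => ?_)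
    rw [Pi.smul_apply, smul_eq_mul, Complex.exp_eq_exp_ℂ]
  -- exp of scaled A
  have hexpA : ∀ t : ℝ, exp ((t:ℂ) • A)
      = X * Matrix.diagonal (fun i => Complex.exp ((t:ℂ) * l i)) * X⁻¹ := by
    intro t
    have h1 : (t:ℂ) • A = X * ((t:ℂ) • Matrix.diagonal l) * X⁻¹ := by
      rw [hdiag, Matrix.mul_smul, Matrix.smul_mul]
    rw [h1, Matrix.exp_conj X _ hX, hexpdiag]
  -- the scalar matrix M
  set M : ℝ → Matrix (Fin n) (Fin n) ℂ :=
    fun t => Matrix.of fun i j => Complex.exp ((t:ℂ) * μ i j) with hM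
  -- the integrand in factored form
  have hfun : ∀ t : ℝ,
      exp ((t:ℂ) • A) * B * Bᴴ * exp ((t:ℂ) • Aᴴ)
        = XB * M t * XBᴴ := by
    intro t
    set E : Matrix (Fin n) (Fin 1) ℂ :=
      Matrix.of fun i (_ : Fin 1) => Complex.exp ((t:ℂ) * l i) with hE
    have hAH : exp ((t:ℂ) • Aᴴ) = (exp ((t:ℂ) • A))ᴴ := by
      have h2 : (t:ℂ) • Aᴴ = ((t:ℂ) • A)ᴴ := by
        rw [Matrix.conjTranspose_smul]
        congr 1
        simp [Complex.star_def, Complex.conj_ofReal]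
      rw [h2, Matrix.exp_conjTranspose]
    have hEB : exp ((t:ℂ) • A) * B = XB * E := by
      have key : Matrix.diagonal (fun i => Complex.exp ((t:ℂ) * l i)) * (X⁻¹ * B)
          = Matrix.diagonal (fun i => (X⁻¹ * B) i 0) * E := by
        ext i k
        have hk : k = 0 := Subsingleton.elim k 0
        subst hk
        simp [Matrix.diagonal_mul, hE, mul_comm]
      rw [hexpA, hXB, Matrix.mul_assoc, Matrix.mul_assoc, key, ← Matrix.mul_assoc]
    have hEE : E * Eᴴ = M t := by
      ext i j
      simp only [Matrix.mul_apply, Matrix.conjTranspose_apply, hE, Matrix.of_apply, hM,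
        Fin.sum_univ_one, RCLike.star_def]
      simp only [hμ]
      rw [← Complex.exp_conj, ← Complex.exp_add]
      congr 1
      rw [_root_.map_mul, Complex.conj_ofReal, mul_add]
    calc exp ((t:ℂ) • A) * B * Bᴴ * exp ((t:ℂ) • Aᴴ)
        = (exp ((t:ℂ) • A) * B) * (exp ((t:ℂ) • A) * B)ᴴ := by
          rw [hAH, Matrix.conjTranspose_mul]
          exact Matrix.mul_assoc _ _ _
      _ = XB * (E * Eᴴ) * XBᴴ := by
          rw [hEB, Matrix.conjTranspose_mul]
          simp only [Matrix.mul_assoc]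
      _ = XB * M t * XBᴴ := by rw [hEE]
  -- continuity / integrability of M
  have hMcont : Continuous M := by
    apply continuous_matrix
    intro i j
    exact Complex.continuous_exp.comp ((Complex.continuous_ofReal.mul continuous_const))
  have hMint :=
    hMcont.intervalIntegrable (μ := MeasureTheory.volume) 0 te
  -- fundamental theorem of calculus for M
  set F : ℝ → Matrix (Fin n) (Fin n) ℂ :=
    fun t => Matrix.of fun i j => Complex.exp ((t:ℂ) * μ i j) / μ i j with hF
  have hderiv : ∀ t : ℝ, HasDerivAt F (M t) t := by
    intro t
    have : ∀ i j, HasDerivAt (fun s : ℝ => Complex.exp ((s:ℂ) * μ i j) / μ i j)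
        (Complex.exp ((t:ℂ) * μ i j)) t := by
      intro i j
      have hc : HasDerivAt (fun z : ℂ => Complex.exp (z * μ i j) / μ i j)
          (Complex.exp ((t:ℂ) * μ i j)) (t:ℂ) := by
        have h1 : HasDerivAt (fun z : ℂ => z * μ i j) (μ i j) (t:ℂ) := by
          simpa using (hasDerivAt_id ((t:ℂ))).mul_const (μ i j)
        have h2 : HasDerivAt (fun z : ℂ => Complex.exp (z * μ i j))
            (Complex.exp ((t:ℂ) * μ i j) * μ i j) (t:ℂ) :=
          (Complex.hasDerivAt_exp _).comp _ h1
        have h3 := h2.div_const (μ i j)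
        simpa [mul_div_assoc, div_self (hμ0 i j)] using h3
      exact hc.comp_ofReal
    exact hasDerivAt_pi.2 fun i => hasDerivAt_pi.2 fun j => this i j
  have hFTC : (∫ t in (0:ℝ)..te, M t) = F te - F 0 :=
    intervalIntegral.integral_eq_sub_of_hasDerivAt (fun t _ => hderiv t) hMint
  -- the middle matrix equals the Cauchy expression
  have hmid : F te - F 0
      = (Matrix.of fun i j => -(1 / (l i + conj (l j))))
          - exp ((te:ℂ) • Matrix.diagonal l) *
              (Matrix.of fun i j => -(1 / (l i + conj (l j)))) *
              exp ((te:ℂ) • (Matrix.diagonal l)ᴴ) := by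
    rw [Matrix.diagonal_conjTranspose, hexpdiag, hexpdiag]
    ext i j
    have h0 := hμ0 i j
    rw [hμ] at h0
    simp only [Matrix.sub_apply, hF, Matrix.of_apply, Matrix.diagonal_mul, Matrix.mul_diagonal,
      Complex.ofReal_zero, zero_mul, Complex.exp_zero, Pi.star_apply, RCLike.star_def, hμ,
      mul_add, Complex.exp_add]
    field_simp
    ring
  -- pull the constant factors out of the integral
  let Lmap : Matrix (Fin n) (Fin n) ℂ →ₗ[ℂ] Matrix (Fin n) (Fin n) ℂ :=
    { toFun := fun P => XB * P * XBᴴ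
      map_add' := fun P Q => by simp only [Matrix.mul_add, Matrix.add_mul]
      map_smul' := fun c P => by
        simp [Matrix.mul_smul, Matrix.smul_mul] }
  let L : Matrix (Fin n) (Fin n) ℂ →L[ℂ] Matrix (Fin n) (Fin n) ℂ :=
    LinearMap.toContinuousLinearMap Lmap
  have hL : ∀ P, L P = XB * P * XBᴴ := fun P => rfl
  calc (∫ t in (0:ℝ)..te, exp ((t:ℂ) • A) * B * Bᴴ * exp ((t:ℂ) • Aᴴ))
      = ∫ t in (0:ℝ)..te, L (M t) := by
        apply intervalIntegral.integral_congr
        intro t _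
        exact (hfun t).trans (congrArg (· * XBᴴ) (congrArg (XB * ·) rfl)) |>.trans (hL (M t)).symm
    _ = L (∫ t in (0:ℝ)..te, M t) := L.intervalIntegral_comp_comm hMint
    _ = XB * (F te - F 0) * XBᴴ := by rw [hFTC, hL]
    _ = _ := by rw [hmid]
end

section
/- For a Hurwitz matrix A and generalized system with nonsingular M, the time-limited generalized Gramian P_T (over [t_s,t_e]) of the system M ẋ = Ax + Bu, defined as P_T = ∫_{t_s}^{t_e} exp(M⁻¹A t) M⁻¹B Bᵀ M⁻ᵀ exp(Aᵀ M⁻ᵀ t) dt, satisfies the generalized Lyapunov equation A P_T Mᵀ + M P_T Aᵀ = −B_{t_s} B_{t_s}ᵀ + B_{t_e} B_{t_e}ᵀ with B_t = M exp(M⁻¹A t) M⁻¹ B = exp(A M⁻¹ t) B. -/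
open Matrix MeasureTheory NormedSpace
open scoped Matrix

lemma gramian_aux_entry {n : ℕ} (X C : Matrix (Fin n) (Fin n) ℝ) (t : ℝ) (i j : Fin n) :
    HasDerivAt (fun s : ℝ => (NormedSpace.exp (s • X) * C * NormedSpace.exp (s • Xᵀ)) i j)
      ((X * (NormedSpace.exp (t • X) * C * NormedSpace.exp (t • Xᵀ))
        + (NormedSpace.exp (t • X) * C * NormedSpace.exp (t • Xᵀ)) * Xᵀ) i j) t := by
  letI : NormedRing (Matrix (Fin n) (Fin n) ℝ) := Matrix.linftyOpNormedRing
  letI : NormedAlgebra ℝ (Matrix (Fin n) (Fin n) ℝ) := Matrix.linftyOpNormedAlgebra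
  letI : CompleteSpace (Matrix (Fin n) (Fin n) ℝ) := FiniteDimensional.complete ℝ _
  have h1 := hasDerivAt_exp_smul_const' (𝕂 := ℝ) X t
  have h2 := hasDerivAt_exp_smul_const (𝕂 := ℝ) Xᵀ t
  have h3 := (h1.mul_const C).mul h2
  have h4 := (LinearMap.toContinuousLinearMap
    (Matrix.entryLinearMap ℝ ℝ i j)).hasFDerivAt.comp_hasDerivAt t h3
  simp only [Function.comp_def, LinearMap.coe_toContinuousLinearMap',
    Matrix.entryLinearMap_apply] at h4
  convert h4 using 2 <;> (try simp [mul_assoc]) <;> rfl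

attribute [local instance] Matrix.normedAddCommGroup Matrix.normedSpace

lemma gramian_aux {n : ℕ} (X C : Matrix (Fin n) (Fin n) ℝ) (t : ℝ) :
    HasDerivAt (fun s : ℝ => NormedSpace.exp (s • X) * C * NormedSpace.exp (s • Xᵀ))
      (X * (NormedSpace.exp (t • X) * C * NormedSpace.exp (t • Xᵀ))
        + (NormedSpace.exp (t • X) * C * NormedSpace.exp (t • Xᵀ)) * Xᵀ) t := by
  exact hasDerivAt_pi.mpr fun i => hasDerivAt_pi.mpr fun j => gramian_aux_entry X C t i j

/-- The continuous linear map `N ↦ P * N * Q`. -/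
noncomputable def sandwichCLM {n : ℕ} (P Q : Matrix (Fin n) (Fin n) ℝ) :
    Matrix (Fin n) (Fin n) ℝ →L[ℝ] Matrix (Fin n) (Fin n) ℝ :=
  LinearMap.toContinuousLinearMap
    { toFun := fun N => P * N * Q
      map_add' := by intro x y; simp [Matrix.mul_add, Matrix.add_mul]
      map_smul' := by intro c x; simp [Matrix.mul_smul, Matrix.smul_mul] }

@[simp] lemma sandwichCLM_apply {n : ℕ} (P Q N : Matrix (Fin n) (Fin n) ℝ) :
    sandwichCLM P Q N = P * N * Q := rfl

set_option maxHeartbeats 2000000 in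
lemma gramian_main {n m : ℕ}
    (M A : Matrix (Fin n) (Fin n) ℝ) (B : Matrix (Fin n) (Fin m) ℝ)
    (hM : IsUnit M) (ts te : ℝ) :
    A * (∫ t in ts..te,
          NormedSpace.exp (t • (M⁻¹ * A)) * (M⁻¹ * B) * (M⁻¹ * B)ᵀ * NormedSpace.exp (t • (M⁻¹ * A)ᵀ)) * Mᵀ
      + M * (∫ t in ts..te,
          NormedSpace.exp (t • (M⁻¹ * A)) * (M⁻¹ * B) * (M⁻¹ * B)ᵀ * NormedSpace.exp (t • (M⁻¹ * A)ᵀ)) * Aᵀ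
      = -((M * NormedSpace.exp (ts • (M⁻¹ * A)) * M⁻¹ * B) * (M * NormedSpace.exp (ts • (M⁻¹ * A)) * M⁻¹ * B)ᵀ)
        + (M * NormedSpace.exp (te • (M⁻¹ * A)) * M⁻¹ * B) * (M * NormedSpace.exp (te • (M⁻¹ * A)) * M⁻¹ * B)ᵀ := by
  have hdet : IsUnit M.det := (Matrix.isUnit_iff_isUnit_det M).mp hM
  set X := M⁻¹ * A with hX
  set C := (M⁻¹ * B) * (M⁻¹ * B)ᵀ with hC
  set F : ℝ → Matrix (Fin n) (Fin n) ℝ := fun s => NormedSpace.exp (s • X) * C * NormedSpace.exp (s • Xᵀ) with hF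
  have hMX : M * X = A := Matrix.mul_nonsing_inv_cancel_left M A hdet
  have hFc : Continuous F := by
    rw [continuous_iff_continuousAt]
    exact fun t => (gramian_aux X C t).continuousAt
  have hFi := hFc.intervalIntegrable (μ := volume) ts te
  have hD : ∀ t : ℝ, HasDerivAt (fun s => M * F s * Mᵀ) (A * F t * Mᵀ + M * F t * Aᵀ) t := by
    intro t
    have h := (sandwichCLM M Mᵀ).hasFDerivAt.comp_hasDerivAt t (gramian_aux X C t)
    simp only [Function.comp_def, sandwichCLM_apply] at h
    refine h.congr_deriv (Eq.symm ?_)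
    show A * F t * Mᵀ + M * F t * Aᵀ = M * (X * F t + F t * Xᵀ) * Mᵀ
    rw [Matrix.mul_add, Matrix.add_mul]
    congr 1
    · rw [← hMX, Matrix.mul_assoc M X (F t)]
    · rw [← hMX, Matrix.transpose_mul, ← Matrix.mul_assoc (M * F t) Xᵀ Mᵀ,
        Matrix.mul_assoc M (F t) Xᵀ]
  have hGc : Continuous fun t => A * F t * Mᵀ + M * F t * Aᵀ :=
    ((continuous_const.matrix_mul hFc).matrix_mul continuous_const).add
      ((continuous_const.matrix_mul hFc).matrix_mul continuous_const)
  have hFTC := intervalIntegral.integral_eq_sub_of_hasDerivAt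
    (f := fun s => M * F s * Mᵀ) (fun t _ => hD t) (hGc.intervalIntegrable ts te)
  have hcomm := ((sandwichCLM A Mᵀ) + (sandwichCLM M Aᵀ)).intervalIntegral_comp_comm hFi
  change (∫ t in ts..te, A * F t * Mᵀ + M * F t * Aᵀ)
    = A * (∫ t in ts..te, F t) * Mᵀ + M * (∫ t in ts..te, F t) * Aᵀ at hcomm
  have key : A * (∫ t in ts..te, F t) * Mᵀ + M * (∫ t in ts..te, F t) * Aᵀ
      = M * F te * Mᵀ - M * F ts * Mᵀ := by
    rw [← hcomm, hFTC]
  have hBB : ∀ t : ℝ, M * F t * Mᵀ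
      = (M * NormedSpace.exp (t • X) * M⁻¹ * B) * (M * NormedSpace.exp (t • X) * M⁻¹ * B)ᵀ := by
    intro t
    have he : NormedSpace.exp (t • Xᵀ) = (NormedSpace.exp (t • X))ᵀ := by
      rw [← Matrix.transpose_smul, Matrix.exp_transpose]
    rw [hF]
    simp only [he, hC, Matrix.transpose_mul, Matrix.transpose_transpose, Matrix.mul_assoc]
  have hFeq : (∫ t in ts..te, NormedSpace.exp (t • X) * (M⁻¹ * B) * (M⁻¹ * B)ᵀ * NormedSpace.exp (t • Xᵀ))
      = ∫ t in ts..te, F t := by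
    congr 1
    funext t
    rw [hF, hC, Matrix.mul_assoc (NormedSpace.exp (t • X)) (M⁻¹ * B) ((M⁻¹ * B)ᵀ)]
  rw [hFeq]
  calc A * (∫ t in ts..te, F t) * Mᵀ + M * (∫ t in ts..te, F t) * Aᵀ
      = M * F te * Mᵀ - M * F ts * Mᵀ := key
    _ = _ := by rw [hBB, hBB]; abel

def IsHurwitz {n : ℕ} (A : Matrix (Fin n) (Fin n) ℝ) : Prop :=
  ∀ μ ∈ spectrum ℂ (A.map (algebraMap ℝ ℂ)), μ.re < 0

theorem generalized_time_limited_gramian_lyapunov {n m : ℕ}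
    (M A : Matrix (Fin n) (Fin n) ℝ) (B : Matrix (Fin n) (Fin m) ℝ)
    (hM : IsUnit M) (hA : IsHurwitz (M⁻¹ * A))
    (ts te : ℝ) (hts : 0 ≤ ts) (hte : ts < te) :
    A * (∫ t in ts..te,
          NormedSpace.exp (t • (M⁻¹ * A)) * (M⁻¹ * B) * (M⁻¹ * B)ᵀ * NormedSpace.exp (t • (M⁻¹ * A)ᵀ)) * Mᵀ
      + M * (∫ t in ts..te,
          NormedSpace.exp (t • (M⁻¹ * A)) * (M⁻¹ * B) * (M⁻¹ * B)ᵀ * NormedSpace.exp (t • (M⁻¹ * A)ᵀ)) * Aᵀ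
      = -((M * NormedSpace.exp (ts • (M⁻¹ * A)) * M⁻¹ * B) * (M * NormedSpace.exp (ts • (M⁻¹ * A)) * M⁻¹ * B)ᵀ)
        + (M * NormedSpace.exp (te • (M⁻¹ * A)) * M⁻¹ * B) * (M * NormedSpace.exp (te • (M⁻¹ * A)) * M⁻¹ * B)ᵀ :=
  gramian_main M A B hM ts te
end
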